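/- Let A, P be real d×n matrices with σ = ‖A−P‖/√n, M a real d×k matrix, k ≥ 2, α ∈ (0,1), δ ∈ (0,1/k] with δn a positive integer, and 0 ≤ r ≤ k−1. Assume every column of P lies in the convex hull of the columns of M, Well-Separatedness with parameter α, Spectrally Bounded Perturbations, and Proximate Latent Points. Suppose R_1,…,R_r ⊆ {1,…,n} each have cardinality δn and distinct ℓ_1,…,ℓ_r ∈ [k] satisfy |A_{R_t} − M_{ℓ_t}| ≤ 150·k⁴·σ/(α√δ) for all t. Let u ∈ ℝ^d be a unit vector with u·A_{R_t} = 0 for t = 1,…,r that satisfies: (i) for all distinct ℓ, ℓ′ ∉ {ℓ_1,…,ℓ_r}, |u·(M_ℓ − M_{ℓ′})| ≥ (0.097·α/k⁴)·max_{ℓ''}|M_{ℓ''}|, and (ii) for all ℓ ∉ {ℓ_1,…,ℓ_r}, |u·M_ℓ| ≥ (0.09989·α/k⁴)·max_{ℓ''}|M_{ℓ''}|. Let R_{r+1} ⊆ {1,…,n} with |R_{r+1}| = δn maximize |u·A_T| over all subsets T of cardinality δn. Then there exists ℓ ∉ {ℓ_1,…,ℓ_r} such that |A_{R_{r+1}}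 − M_ℓ| ≤ 150·k⁴·σ/(α√δ). -/

import Mathlib

open Matrix

noncomputable def col {d k : ℕ} (M : Matrix (Fin d) (Fin k) ℝ) (ℓ : Fin k) :
    EuclideanSpace ℝ (Fin d) := WithLp.toLp 2 (fun i => M i ℓ)

noncomputable def specNorm {d n : ℕ} (B : Matrix (Fin d) (Fin n) ℝ) : ℝ :=
  ‖LinearMap.toContinuousLinearMap (Matrix.toEuclideanLin B)‖

noncomputable def colAvg {d n : ℕ} (A : Matrix (Fin d) (Fin n) ℝ) (S : Finset (Fin n)) :
    EuclideanSpace ℝ (Fin d) :=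
  (S.card : ℝ)⁻¹ • ∑ j ∈ S, _root_.col A j

/-- Norm of the component of `x` orthogonal to the span of the columns `M ℓ'`, `ℓ' ≠ ℓ`. -/
noncomputable def projNullNorm {d k : ℕ} (M : Matrix (Fin d) (Fin k) ℝ) (ℓ : Fin k)
    (x : EuclideanSpace ℝ (Fin d)) : ℝ :=
  ‖(Submodule.orthogonalProjection ((Submodule.span ℝ {y | ∃ ℓ' : Fin k, ℓ' ≠ ℓ ∧ y = _root_.col M ℓ'})ᗮ) x :
      EuclideanSpace ℝ (Fin d))‖

lemma sum_col_bound {d n : ℕ} (B : Matrix (Fin d) (Fin n) ℝ) (S : Finset (Fin n)) :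
    ‖∑ j ∈ S, _root_.col B j‖ ≤ specNorm B * Real.sqrt S.card := by
  classical
  set v : EuclideanSpace ℝ (Fin n) :=
    (WithLp.equiv 2 (Fin n → ℝ)).symm (fun j => if j ∈ S then (1:ℝ) else 0) with hv
  have h1 : Matrix.toEuclideanLin B v = ∑ j ∈ S, _root_.col B j := by
    apply (WithLp.equiv 2 (Fin d → ℝ)).injective
    funext i
    rw [hv]
    show (B *ᵥ fun j => if j ∈ S then (1:ℝ) else 0) i
      = WithLp.equiv 2 (Fin d → ℝ) (∑ j ∈ S, _root_.col B j) i
    have h2 : WithLp.equiv 2 (Fin d → ℝ) (∑ j ∈ S, _root_.col B j) i = ∑ j ∈ S, B i j := by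
      show (∑ j ∈ S, _root_.col B j).ofLp i = ∑ j ∈ S, B i j
      rw [WithLp.ofLp_sum, Finset.sum_apply]
      rfl
    rw [h2, Matrix.mulVec, dotProduct]
    simp [mul_ite]
  have h3 : ‖v‖ = Real.sqrt S.card := by
    rw [EuclideanSpace.norm_eq]
    congr 1
    have : ∀ j, ‖(WithLp.equiv 2 (Fin n → ℝ)).symm (fun j => if j ∈ S then (1:ℝ) else 0) j‖ ^ 2
        = if j ∈ S then (1:ℝ) else 0 := by
      intro j
      show ‖if j ∈ S then (1:ℝ) else 0‖ ^ 2 = _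
      by_cases h : j ∈ S <;> simp [h]
    rw [hv]
    simp only [this]
    rw [Finset.sum_ite_mem, Finset.univ_inter, Finset.sum_const, nsmul_eq_mul, mul_one]
  calc ‖∑ j ∈ S, _root_.col B j‖ = ‖(LinearMap.toContinuousLinearMap (Matrix.toEuclideanLin B)) v‖ := by
        rw [← h1]; rfl
    _ ≤ specNorm B * ‖v‖ := (LinearMap.toContinuousLinearMap (Matrix.toEuclideanLin B)).le_opNorm v
    _ = specNorm B * Real.sqrt S.card := by rw [h3]

lemma hull_weights {E : Type*} [AddCommGroup E] [Module ℝ E] {ι : Type*} [Fintype ι]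
    (f : ι → E) (x : E) (hx : x ∈ convexHull ℝ (Set.range f)) :
    ∃ w : ι → ℝ, (∀ i, 0 ≤ w i) ∧ ∑ i, w i = 1 ∧ ∑ i, w i • f i = x := by
  classical
  rw [mem_convexHull_iff_exists_fintype] at hx
  obtain ⟨ι', hft, w', z', hw0, hw1, hz, hzx⟩ := hx
  choose φ hφ using fun i => (hz i)
  refine ⟨fun j => ∑ i ∈ Finset.univ.filter (fun i => φ i = j), w' i, ?_, ?_, ?_⟩
  · intro j; exact Finset.sum_nonneg fun i _ => hw0 i
  · rw [Finset.sum_fiberwise Finset.univ φ w', hw1]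
  · rw [← hzx, ← Finset.sum_fiberwise Finset.univ φ (fun i => w' i • z' i)]
    refine Finset.sum_congr rfl fun j _ => ?_
    rw [Finset.sum_smul]
    refine Finset.sum_congr rfl fun i hi => ?_
    rw [Finset.mem_filter] at hi
    rw [← hi.2, hφ]

set_option maxHeartbeats 1000000 in
theorem stmt13 {d n k r : ℕ} (hk : 2 ≤ k) (hrk : r ≤ k - 1)
    (A P : Matrix (Fin d) (Fin n) ℝ) (M : Matrix (Fin d) (Fin k) ℝ)
    (σ : ℝ) (hσ : σ = specNorm (A - P) / Real.sqrt n)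
    (α δ : ℝ) (hα : α ∈ Set.Ioo (0:ℝ) 1) (hδ0 : 0 < δ) (hδk : δ ≤ 1 / k)
    (m : ℕ) (hm0 : 0 < m) (hm : (m : ℝ) = δ * n)
    (hPK : ∀ j : Fin n, _root_.col P j ∈ convexHull ℝ (Set.range (_root_.col M)))
    (hWS : ∀ ℓ : Fin k, α * (⨆ ℓ' : Fin k, ‖_root_.col M ℓ'‖) ≤ projNullNorm M ℓ (_root_.col M ℓ))
    (hSB : σ / Real.sqrt δ ≤ α ^ 3 * (⨅ ℓ : Fin k, ‖_root_.col M ℓ‖) / (4500 * (k : ℝ) ^ 9))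
    (hProx : ∀ ℓ : Fin k, ∃ S : Finset (Fin n), S.card = m ∧
      ∀ j ∈ S, ‖_root_.col P j - _root_.col M ℓ‖ ≤ 4 * σ / Real.sqrt δ)
    (R : Fin r → Finset (Fin n)) (hRcard : ∀ t, (R t).card = m)
    (ℓidx : Fin r → Fin k) (hinj : Function.Injective ℓidx)
    (hclose : ∀ t, ‖colAvg A (R t) - _root_.col M (ℓidx t)‖
      ≤ 150 * (k : ℝ) ^ 4 * σ / (α * Real.sqrt δ))
    (u : EuclideanSpace ℝ (Fin d)) (hu : ‖u‖ = 1)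
    (huR : ∀ t, (inner ℝ u (colAvg A (R t)) : ℝ) = 0)
    (hui : ∀ ℓ ℓ' : Fin k, ℓ ≠ ℓ' → (∀ t, ℓ ≠ ℓidx t) → (∀ t, ℓ' ≠ ℓidx t) →
      (0.097 * α / (k : ℝ) ^ 4) * (⨆ ℓ'' : Fin k, ‖_root_.col M ℓ''‖)
        ≤ |(inner ℝ u (_root_.col M ℓ - _root_.col M ℓ') : ℝ)|)
    (huii : ∀ ℓ : Fin k, (∀ t, ℓ ≠ ℓidx t) →
      (0.09989 * α / (k : ℝ) ^ 4) * (⨆ ℓ'' : Fin k, ‖_root_.col M ℓ''‖)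
        ≤ |(inner ℝ u (_root_.col M ℓ) : ℝ)|)
    (R' : Finset (Fin n)) (hR'card : R'.card = m)
    (hR'max : ∀ T : Finset (Fin n), T.card = m →
      |(inner ℝ u (colAvg A T) : ℝ)| ≤ |(inner ℝ u (colAvg A R') : ℝ)|) :
    ∃ ℓ : Fin k, (∀ t, ℓ ≠ ℓidx t) ∧
      ‖colAvg A R' - _root_.col M ℓ‖ ≤ 150 * (k : ℝ) ^ 4 * σ / (α * Real.sqrt δ) := by
  classical
  obtain ⟨hα0, hα1⟩ := hα
  set K : ℝ := (k : ℝ) with hKdef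
  have hK2 : (2:ℝ) ≤ K := by rw [hKdef]; exact_mod_cast hk
  have hK0 : (0:ℝ) < K := by linarith only [hK2]
  have hK4 : (16:ℝ) ≤ K^4 := by
    calc (16:ℝ) = 2 ^ 4 := by norm_num
      _ ≤ K ^ 4 := pow_le_pow_left₀ (by norm_num) hK2 4
  set β : ℝ := σ / Real.sqrt δ with hβdef
  set c : ℝ := 150 * K ^ 4 * σ / (α * Real.sqrt δ) with hcdef
  have hsd : 0 < Real.sqrt δ := Real.sqrt_pos.2 hδ0
  have hn0 : 0 < n := by
    have := hR'card ▸ Finset.card_le_univ R'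
    simp only [Finset.card_univ, Fintype.card_fin] at this
    omega
  have hσ0 : 0 ≤ σ := hσ ▸ div_nonneg (norm_nonneg _) (Real.sqrt_nonneg _)
  have hβ0 : 0 ≤ β := div_nonneg hσ0 hsd.le
  have hc_eq : c = 150 * K ^ 4 * β / α := by
    rw [hcdef, hβdef, ← mul_div_assoc, div_div, mul_comm (Real.sqrt δ) α]
  have hm' : (m:ℝ) ≠ 0 := Nat.cast_ne_zero.2 hm0.ne'
  -- spectral average bound
  have hspec : ∀ S : Finset (Fin n), S.card = m → ‖colAvg A S - colAvg P S‖ ≤ β := by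
    intro S hS
    have h1 : colAvg A S - colAvg P S = (m:ℝ)⁻¹ • ∑ j ∈ S, _root_.col (A - P) j := by
      unfold colAvg
      rw [hS, ← smul_sub, ← Finset.sum_sub_distrib]
      rfl
    rw [h1, norm_smul]
    have h2 := sum_col_bound (A - P) S
    rw [hS] at h2
    have hsn : (0:ℝ) < Real.sqrt n := Real.sqrt_pos.2 (by exact_mod_cast hn0)
    have hmv : (m:ℝ) = (Real.sqrt δ * Real.sqrt n) * (Real.sqrt δ * Real.sqrt n) := by
      rw [hm, mul_mul_mul_comm, Real.mul_self_sqrt hδ0.le,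
        Real.mul_self_sqrt (Nat.cast_nonneg n)]
    have hsm : Real.sqrt (m:ℝ) = Real.sqrt δ * Real.sqrt n := by
      rw [hm, Real.sqrt_mul hδ0.le]
    calc ‖(m:ℝ)⁻¹‖ * ‖∑ j ∈ S, _root_.col (A - P) j‖
        ≤ (m:ℝ)⁻¹ * (specNorm (A - P) * Real.sqrt m) := by
          rw [Real.norm_eq_abs, abs_of_nonneg (by positivity)]
          exact mul_le_mul_of_nonneg_left h2 (by positivity)
      _ = β := by
          rw [hβdef, hσ, hsm, hmv]
          field_simp
  -- convex hull membership of the average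
  have hhull : colAvg P R' ∈ convexHull ℝ (Set.range (_root_.col M)) := by
    have h0 : colAvg P R' = ∑ j ∈ R', (m:ℝ)⁻¹ • _root_.col P j := by
      unfold colAvg; rw [hR'card, Finset.smul_sum]
    rw [h0]
    apply Convex.sum_mem (convex_convexHull ℝ _)
    · intro j _; positivity
    · rw [Finset.sum_const, hR'card, nsmul_eq_mul, mul_inv_cancel₀ hm']
    · intro j _; exact hPK j
  obtain ⟨w, hw0, hw1, hwsum⟩ := hull_weights (_root_.col M) _ hhull
  -- unused index exists
  have hUex : ∃ ℓ : Fin k, ∀ t, ℓ ≠ ℓidx t := by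
    have h1 : (Finset.univ.image ℓidx).card = r := by
      rw [Finset.card_image_of_injective _ hinj, Finset.card_univ, Fintype.card_fin]
    obtain ⟨ℓ, hℓ⟩ : ∃ ℓ : Fin k, ℓ ∉ Finset.univ.image ℓidx := by
      by_contra h
      push_neg at h
      have h2 : (Finset.univ : Finset (Fin k)) ⊆ Finset.univ.image ℓidx := fun x _ => h x
      have h3 := Finset.card_le_card h2
      simp only [Finset.card_univ, Fintype.card_fin, h1] at h3
      omega
    exact ⟨ℓ, fun t ht => hℓ (Finset.mem_image.2 ⟨t, Finset.mem_univ t, ht.symm⟩)⟩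
  -- Mmax facts
  haveI : Nonempty (Fin k) := ⟨⟨0, by omega⟩⟩
  set Mmax : ℝ := ⨆ ℓ' : Fin k, ‖_root_.col M ℓ'‖ with hMmaxdef
  have hMle : ∀ ℓ, ‖_root_.col M ℓ‖ ≤ Mmax :=
    fun ℓ => le_ciSup (f := fun ℓ' : Fin k => ‖_root_.col M ℓ'‖)
      (Set.Finite.bddAbove (Set.finite_range _)) ℓ
  have hMmax0 : 0 ≤ Mmax := le_trans (norm_nonneg _) (hMle ⟨0, by omega⟩)
  have hβc : β ≤ c := by
    rw [hc_eq, le_div_iff₀ hα0]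
    have e1 : β * α ≤ β := mul_le_of_le_one_right hβ0 hα1.le
    have e2 : 16 * β ≤ K ^ 4 * β := mul_le_mul_of_nonneg_right hK4 hβ0
    linarith only [e1, e2, hβ0]
  by_cases hM0 : Mmax ≤ 0
  -- degenerate case : all columns of M vanish
  · obtain ⟨ℓu, hℓu⟩ := hUex
    have hMz : ∀ ℓ, _root_.col M ℓ = 0 := by
      intro ℓ
      have h1 : ‖_root_.col M ℓ‖ = 0 := le_antisymm (le_trans (hMle ℓ) hM0) (norm_nonneg _)
      exact norm_eq_zero.1 h1
    have hPz : colAvg P R' = 0 := by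
      rw [← hwsum]
      simp [hMz]
    refine ⟨ℓu, hℓu, ?_⟩
    have h1 : ‖colAvg A R' - _root_.col M ℓu‖ = ‖colAvg A R' - colAvg P R'‖ := by
      rw [hMz, hPz]
    rw [h1]
    exact le_trans (hspec R' hR'card) hβc
  push_neg at hM0
  -- main case
  set Q : ℝ := α * Mmax / K ^ 4 with hQdef
  have hQ0 : 0 < Q := by rw [hQdef]; positivity
  have hMminle : (⨅ ℓ : Fin k, ‖_root_.col M ℓ‖) ≤ Mmax := by
    refine le_trans (ciInf_le (f := fun ℓ : Fin k => ‖_root_.col M ℓ‖)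
      (Set.Finite.bddBelow (Set.finite_range _)) ⟨0, by omega⟩) (hMle _)
  have hβ' : β ≤ α ^ 3 * Mmax / (4500 * K ^ 9) := by
    refine le_trans hSB ?_
    gcongr
  have hc60 : c * (60 * K ^ 4) ≤ α * Mmax := by
    have h1 : β * (4500 * K ^ 9) ≤ α ^ 3 * Mmax := (le_div_iff₀ (by positivity)).1 hβ'
    have hcα : c * α = 150 * K ^ 4 * β := by
      rw [hc_eq]; field_simp
    have step1 : 9000 * K ^ 9 * β ≤ 2 * (α ^ 3 * Mmax) := by linarith only [h1]
    have step2 : 2 * (α ^ 3 * Mmax) ≤ α ^ 2 * Mmax * K := by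
      have hK2a : (0:ℝ) ≤ K - 2 * α := by linarith only [hK2, hα1]
      have hh := mul_nonneg (mul_nonneg (sq_nonneg α) hMmax0) hK2a
      nlinarith only [hh]
    have hαK : 0 < α * K := by positivity
    refine le_of_mul_le_mul_right ?_ hαK
    calc c * (60 * K ^ 4) * (α * K) = c * α * (60 * K ^ 5) := by ring
      _ = 9000 * K ^ 9 * β := by rw [hcα]; ring
      _ ≤ α ^ 2 * Mmax * K := step1.trans step2
      _ = α * Mmax * (α * K) := by ring
  -- inner products with columns
  set v : Fin k → ℝ := fun ℓ => (inner ℝ u (_root_.col M ℓ) : ℝ) with hvdef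
  have hv : ∀ ℓ, v ℓ = (inner ℝ u (_root_.col M ℓ) : ℝ) := fun ℓ => rfl
  have habs : ∀ y : EuclideanSpace ℝ (Fin d), |(inner ℝ u y : ℝ)| ≤ ‖y‖ := fun y => by
    calc |(inner ℝ u y : ℝ)| ≤ ‖u‖ * ‖y‖ := abs_real_inner_le_norm u y
      _ = ‖y‖ := by rw [hu, one_mul]
  have hvle : ∀ ℓ, |v ℓ| ≤ Mmax := fun ℓ => le_trans (habs _) (hMle ℓ)
  have hvc : ∀ t, |v (ℓidx t)| ≤ c := by
    intro t
    have h1 : v (ℓidx t) = (inner ℝ u (_root_.col M (ℓidx t) - colAvg A (R t)) : ℝ) := by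
      rw [inner_sub_right, huR t, sub_zero, hv]
    rw [h1]
    refine le_trans (habs _) ?_
    rw [norm_sub_rev]
    exact hclose t
  -- unused indices as a Finset, and a maximizer of |v| on it
  set U : Finset (Fin k) := Finset.univ.filter (fun ℓ => ∀ t, ℓ ≠ ℓidx t) with hUdef
  have hUne : U.Nonempty := by
    obtain ⟨ℓ, hℓ⟩ := hUex
    exact ⟨ℓ, Finset.mem_filter.2 ⟨Finset.mem_univ _, hℓ⟩⟩
  obtain ⟨ℓ0, hℓ0U, hℓ0max⟩ := Finset.exists_max_image U (fun ℓ => |v ℓ|) hUne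
  have hℓ0unused : ∀ t, ℓ0 ≠ ℓidx t := (Finset.mem_filter.1 hℓ0U).2
  set V : ℝ := |v ℓ0| with hVdef
  have hVle : V ≤ Mmax := hvle ℓ0
  have hbV : 0.09989 * Q ≤ V := by
    rw [hVdef]
    calc 0.09989 * Q = 0.09989 * α / K ^ 4 * Mmax := by rw [hQdef]; ring
      _ ≤ |v ℓ0| := huii ℓ0 hℓ0unused
  -- lower bound |T| via the proximate set for ℓ0
  obtain ⟨S, hScard, hSprox⟩ := hProx ℓ0
  have h4β : (4:ℝ) * σ / Real.sqrt δ = 4 * β := by rw [hβdef, mul_div_assoc]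
  have hPSavg : ‖colAvg P S - _root_.col M ℓ0‖ ≤ 4 * β := by
    have hconst : (∑ _j ∈ S, _root_.col M ℓ0) = (m:ℝ) • _root_.col M ℓ0 := by
      rw [Finset.sum_const, hScard, ← Nat.cast_smul_eq_nsmul ℝ]
    have hrw : colAvg P S - _root_.col M ℓ0 = (m:ℝ)⁻¹ • ∑ j ∈ S, (_root_.col P j - _root_.col M ℓ0) := by
      rw [Finset.sum_sub_distrib, smul_sub, hconst, smul_smul, inv_mul_cancel₀ hm', one_smul]
      unfold colAvg; rw [hScard]
    rw [hrw, norm_smul]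
    have h1 : ‖∑ j ∈ S, (_root_.col P j - _root_.col M ℓ0)‖ ≤ (m:ℝ) * (4 * β) := by
      calc ‖∑ j ∈ S, (_root_.col P j - _root_.col M ℓ0)‖ ≤ ∑ j ∈ S, ‖_root_.col P j - _root_.col M ℓ0‖ := norm_sum_le _ _
        _ ≤ ∑ _j ∈ S, 4 * β := Finset.sum_le_sum (fun j hj => h4β ▸ hSprox j hj)
        _ = (m:ℝ) * (4 * β) := by rw [Finset.sum_const, hScard, nsmul_eq_mul]
    calc ‖(m:ℝ)⁻¹‖ * ‖∑ j ∈ S, (_root_.col P j - _root_.col M ℓ0)‖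
        ≤ (m:ℝ)⁻¹ * ((m:ℝ) * (4 * β)) := by
          rw [Real.norm_eq_abs, abs_of_nonneg (by positivity)]
          exact mul_le_mul_of_nonneg_left h1 (by positivity)
      _ = 4 * β := by field_simp
  have hASavg : ‖colAvg A S - _root_.col M ℓ0‖ ≤ 5 * β := by
    calc ‖colAvg A S - _root_.col M ℓ0‖
        ≤ ‖colAvg A S - colAvg P S‖ + ‖colAvg P S - _root_.col M ℓ0‖ := by
          have h := norm_add_le (colAvg A S - colAvg P S) (colAvg P S - _root_.col M ℓ0)
          rwa [sub_add_sub_cancel] at h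
      _ ≤ β + 4 * β := add_le_add (hspec S hScard) hPSavg
      _ = 5 * β := by ring
  set T : ℝ := (inner ℝ u (colAvg A R') : ℝ) with hTdef
  have hTlb : V - 5 * β ≤ |T| := by
    have h1 := hR'max S hScard
    have hX := le_trans (habs (colAvg A S - _root_.col M ℓ0)) hASavg
    have h2 : v ℓ0 = (inner ℝ u (colAvg A S) : ℝ) - (inner ℝ u (colAvg A S - _root_.col M ℓ0) : ℝ) := by
      rw [inner_sub_right, hv]; ring
    have h3 : |v ℓ0| ≤ |(inner ℝ u (colAvg A S) : ℝ)| + |(inner ℝ u (colAvg A S - _root_.col M ℓ0) : ℝ)| := by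
      rw [h2]; exact abs_sub _ _
    have h4 : V = |v ℓ0| := hVdef
    linarith only [h1, hX, h3, h4]
  -- sign normalization
  set ε : ℝ := if 0 ≤ T then 1 else -1 with hεdef
  have hεT : ε * T = |T| := by
    rw [hεdef]
    by_cases h : 0 ≤ T
    · rw [if_pos h, one_mul, abs_of_nonneg h]
    · rw [if_neg h, abs_of_neg (lt_of_not_ge h)]; ring
  have hε1 : |ε| = 1 := by
    rw [hεdef]; by_cases h : 0 ≤ T
    · rw [if_pos h]; simp
    · rw [if_neg h]; simp
  set x : Fin k → ℝ := fun ℓ => ε * v ℓ with hxdef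
  have hx : ∀ ℓ, x ℓ = ε * v ℓ := fun ℓ => rfl
  have hxabs : ∀ ℓ, |x ℓ| = |v ℓ| := fun ℓ => by rw [hx, abs_mul, hε1, one_mul]
  -- decomposition of T
  have hPin : (inner ℝ u (colAvg P R') : ℝ) = ∑ ℓ, w ℓ * v ℓ := by
    rw [← hwsum, inner_sum]
    exact Finset.sum_congr rfl fun ℓ _ => by rw [real_inner_smul_right, hv]
  have hTsum : T = (∑ ℓ, w ℓ * v ℓ) + (inner ℝ u (colAvg A R' - colAvg P R') : ℝ) := by
    rw [inner_sub_right, hPin, hTdef]; ring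
  have hE : |(inner ℝ u (colAvg A R' - colAvg P R') : ℝ)| ≤ β :=
    le_trans (habs _) (hspec R' hR'card)
  have hsumlb : V - 6 * β ≤ ∑ ℓ, w ℓ * x ℓ := by
    have hsv : ∑ ℓ, w ℓ * x ℓ = ε * ∑ ℓ, w ℓ * v ℓ := by
      rw [Finset.mul_sum]
      exact Finset.sum_congr rfl fun ℓ _ => by rw [hx]; ring
    have hεE : ε * (inner ℝ u (colAvg A R' - colAvg P R') : ℝ) ≤ β := by
      calc ε * (inner ℝ u (colAvg A R' - colAvg P R') : ℝ)
          ≤ |ε * (inner ℝ u (colAvg A R' - colAvg P R') : ℝ)| := le_abs_self _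
        _ = |(inner ℝ u (colAvg A R' - colAvg P R') : ℝ)| := by rw [abs_mul, hε1, one_mul]
        _ ≤ β := hE
    have hdec : ε * T = ε * (∑ ℓ, w ℓ * v ℓ)
        + ε * (inner ℝ u (colAvg A R' - colAvg P R') : ℝ) := by rw [hTsum]; ring
    rw [hsv]
    linarith only [hTlb, hεT, hεE, hdec]
  -- maximizer of x on U
  obtain ⟨ℓs, hℓsU, hℓsmax⟩ := Finset.exists_max_image U x hUne
  have hℓsunused : ∀ t, ℓs ≠ ℓidx t := (Finset.mem_filter.1 hℓsU).2
  have hxℓsV : x ℓs ≤ V := by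
    refine le_trans (le_abs_self _) ?_
    rw [hxabs, hVdef]
    exact hℓ0max ℓs hℓsU
  set g : ℝ := min (0.097 * Q) (V - c) with hgdef
  have hgs : g ≤ 0.097 * Q := hgdef ▸ min_le_left _ _
  have hgVc : g ≤ V - c := hgdef ▸ min_le_right _ _
  have hgQ : 0.0832 * Q ≤ g := by
    rw [hgdef]
    apply le_min
    · linarith only [hQ0.le]
    · have hcQ' : c * 60 ≤ Q := by
        rw [hQdef, le_div_iff₀ (by positivity : (0:ℝ) < K ^ 4)]
        calc c * 60 * K ^ 4 = c * (60 * K ^ 4) := by ring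
          _ ≤ α * Mmax := hc60
      linarith only [hbV, hcQ', hQ0.le]
  -- per-term bound
  have hterm : ∀ ℓ, w ℓ * x ℓ ≤ w ℓ * (V - g) + (if ℓ = ℓs then w ℓ * g else 0) := by
    intro ℓ
    by_cases hℓ : ℓ = ℓs
    · subst hℓ
      rw [if_pos rfl]
      have h1 := mul_le_mul_of_nonneg_left hxℓsV (hw0 ℓ)
      have h2 : w ℓ * (V - g) + w ℓ * g = w ℓ * V := by ring
      linarith only [h1, h2]
    · rw [if_neg hℓ, add_zero]
      refine mul_le_mul_of_nonneg_left ?_ (hw0 ℓ)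
      by_cases hU' : ∀ t, ℓ ≠ ℓidx t
      · have hmem : ℓ ∈ U := Finset.mem_filter.2 ⟨Finset.mem_univ _, hU'⟩
        have h1 : x ℓ ≤ x ℓs := hℓsmax ℓ hmem
        have h2 : 0.097 * Q ≤ |x ℓ - x ℓs| := by
          have h3 : |x ℓ - x ℓs| = |v ℓ - v ℓs| := by
            rw [hx, hx, ← mul_sub, abs_mul, hε1, one_mul]
          rw [h3]
          calc 0.097 * Q = 0.097 * α / K ^ 4 * Mmax := by rw [hQdef]; ring
            _ ≤ |(inner ℝ u (_root_.col M ℓ - _root_.col M ℓs) : ℝ)| := hui ℓ ℓs hℓ hU' hℓsunused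
            _ = |v ℓ - v ℓs| := by rw [inner_sub_right, hv, hv]
        have h4 : |x ℓ - x ℓs| = -(x ℓ - x ℓs) := abs_of_nonpos (by linarith only [h1])
        linarith only [h1, h2, h4, hgs, hxℓsV]
      · push_neg at hU'
        obtain ⟨t, ht⟩ := hU'
        have h1 : x ℓ ≤ c := by
          refine le_trans (le_abs_self _) ?_
          rw [hxabs, ht]
          exact hvc t
        linarith only [h1, hgVc]
  have hsum_ub : ∑ ℓ, w ℓ * x ℓ ≤ (V - g) + w ℓs * g := by
    calc ∑ ℓ, w ℓ * x ℓ
        ≤ ∑ ℓ, (w ℓ * (V - g) + if ℓ = ℓs then w ℓ * g else 0) :=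
          Finset.sum_le_sum (fun ℓ _ => hterm ℓ)
      _ = (∑ ℓ, w ℓ) * (V - g) + w ℓs * g := by
          rw [Finset.sum_add_distrib, ← Finset.sum_mul,
            Finset.sum_ite_eq' Finset.univ ℓs (fun ℓ => w ℓ * g), if_pos (Finset.mem_univ ℓs)]
      _ = (V - g) + w ℓs * g := by rw [hw1, one_mul]
  have hwls1 : w ℓs ≤ 1 := by
    calc w ℓs ≤ ∑ ℓ, w ℓ := Finset.single_le_sum (fun ℓ _ => hw0 ℓ) (Finset.mem_univ ℓs)
      _ = 1 := hw1
  have hkey : (1 - w ℓs) * g ≤ 6 * β := by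
    have h := hsumlb.trans hsum_ub
    nlinarith only [h]
  have hew : (1 - w ℓs) * (0.0832 * Q) ≤ 6 * β :=
    le_trans (mul_le_mul_of_nonneg_left hgQ (by linarith only [hwls1])) hkey
  -- distance bound
  have hPdist : ‖colAvg P R' - _root_.col M ℓs‖ ≤ (1 - w ℓs) * (2 * Mmax) := by
    have h1 : colAvg P R' - _root_.col M ℓs = ∑ ℓ, w ℓ • (_root_.col M ℓ - _root_.col M ℓs) := by
      simp only [smul_sub, Finset.sum_sub_distrib]
      rw [← Finset.sum_smul, hw1, one_smul, hwsum]
    rw [h1]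
    calc ‖∑ ℓ, w ℓ • (_root_.col M ℓ - _root_.col M ℓs)‖
        ≤ ∑ ℓ, ‖w ℓ • (_root_.col M ℓ - _root_.col M ℓs)‖ := norm_sum_le _ _
      _ = ∑ ℓ, w ℓ * ‖_root_.col M ℓ - _root_.col M ℓs‖ := by
          refine Finset.sum_congr rfl fun ℓ _ => ?_
          rw [norm_smul, Real.norm_eq_abs, abs_of_nonneg (hw0 ℓ)]
      _ = ∑ ℓ ∈ Finset.univ.erase ℓs, w ℓ * ‖_root_.col M ℓ - _root_.col M ℓs‖ :=
          (Finset.sum_erase _ (by simp)).symm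
      _ ≤ ∑ ℓ ∈ Finset.univ.erase ℓs, w ℓ * (2 * Mmax) := by
          refine Finset.sum_le_sum fun ℓ _ => ?_
          refine mul_le_mul_of_nonneg_left ?_ (hw0 ℓ)
          calc ‖_root_.col M ℓ - _root_.col M ℓs‖ ≤ ‖_root_.col M ℓ‖ + ‖_root_.col M ℓs‖ := norm_sub_le _ _
            _ ≤ 2 * Mmax := by linarith only [hMle ℓ, hMle ℓs]
      _ = (∑ ℓ ∈ Finset.univ.erase ℓs, w ℓ) * (2 * Mmax) := (Finset.sum_mul _ _ _).symm
      _ = (1 - w ℓs) * (2 * Mmax) := by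
          have h2 := Finset.add_sum_erase Finset.univ w (Finset.mem_univ ℓs)
          rw [hw1] at h2
          have h3 : ∑ ℓ ∈ Finset.univ.erase ℓs, w ℓ = 1 - w ℓs := by linarith only [h2]
          rw [h3]
  refine ⟨ℓs, hℓsunused, ?_⟩
  have htri : ‖colAvg A R' - _root_.col M ℓs‖ ≤ β + (1 - w ℓs) * (2 * Mmax) := by
    calc ‖colAvg A R' - _root_.col M ℓs‖
        ≤ ‖colAvg A R' - colAvg P R'‖ + ‖colAvg P R' - _root_.col M ℓs‖ := by
          have h := norm_add_le (colAvg A R' - colAvg P R') (colAvg P R' - _root_.col M ℓs)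
          rwa [sub_add_sub_cancel] at h
      _ ≤ β + (1 - w ℓs) * (2 * Mmax) := add_le_add (hspec R' hR'card) hPdist
  refine le_trans htri ?_
  -- arithmetic finish : β + (1 - w ℓs) * (2 * Mmax) ≤ c
  have hQK : Q * K ^ 4 = α * Mmax := by
    rw [hQdef]; field_simp
  have h1 : (1 - w ℓs) * 0.0832 * (α * Mmax) ≤ 6 * β * K ^ 4 := by
    have h2 := mul_le_mul_of_nonneg_right hew (by positivity : (0:ℝ) ≤ K ^ 4)
    calc (1 - w ℓs) * 0.0832 * (α * Mmax) = ((1 - w ℓs) * (0.0832 * Q)) * K ^ 4 := by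
          rw [← hQK]; ring
      _ ≤ 6 * β * K ^ 4 := h2
  have hcα : c * α = 150 * K ^ 4 * β := by rw [hc_eq]; field_simp
  refine le_of_mul_le_mul_right ?_ hα0
  rw [hcα]
  have hαβ : α * β ≤ β := mul_le_of_le_one_left hβ0 hα1.le
  have hβK : 16 * β ≤ K ^ 4 * β := mul_le_mul_of_nonneg_right hK4 hβ0
  linarith only [h1, hαβ, hβK, hβ0]
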